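/- Under the same setting, let x^N ∈ argmax_{x∈𝒳} (1/N)∑_{n=1}^N 1{û_nᵀx ≥ 0} be the sample-optimal product and x* ∈ argmax_{x∈𝒳} P(ũᵀx ≥ 0) the true-optimal product. Then for any ε > 0 and δ ∈ (0,1), if N ≥ (2e²(K+2)·log 2/ε²)·log(2/δ), with probability at least 1 − δ it holds that P(ũᵀx* ≥ 0) − P(ũᵀx^N ≥ 0) ≤ 2ε. -/

import Mathlib

open MeasureTheory ProbabilityTheory

section SAAHelpers
open Real

lemma saa_mgf_le {Ω : Type*} [MeasurableSpace Ω] (μ : Measure Ω) [IsProbabilityMeasure μ]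
    {X : Ω → ℝ} (hX : Measurable X) (hb : ∀ ω, |X ω| ≤ 1)
    (h0 : ∫ ω, X ω ∂μ = 0) (t : ℝ) : mgf X μ t ≤ Real.exp (t ^ 2 / 2) := by
  have hXint : Integrable X μ := by
    refine Integrable.mono' (integrable_const 1) hX.aestronglyMeasurable (ae_of_all _ hb)
  have key : ∀ ω, Real.exp (t * X ω) ≤
      Real.cosh t + X ω * ((Real.exp t - Real.exp (-t)) / 2) := by
    intro ω
    have hx := abs_le.mp (hb ω)
    have hcvx := convexOn_exp.2 (Set.mem_univ (-t)) (Set.mem_univ t)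
      (show (0:ℝ) ≤ (1 - X ω) / 2 by linarith) (show (0:ℝ) ≤ (1 + X ω) / 2 by linarith)
      (by ring)
    simp only [smul_eq_mul] at hcvx
    have heq : (1 - X ω) / 2 * (-t) + (1 + X ω) / 2 * t = t * X ω := by ring
    rw [heq] at hcvx
    calc Real.exp (t * X ω) ≤ (1 - X ω) / 2 * Real.exp (-t) + (1 + X ω) / 2 * Real.exp t := hcvx
      _ = Real.cosh t + X ω * ((Real.exp t - Real.exp (-t)) / 2) := by
          rw [Real.cosh_eq]; ring
  have hint2 : Integrable (fun ω => Real.cosh t + X ω * ((Real.exp t - Real.exp (-t)) / 2)) μ :=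
    (integrable_const _).add (hXint.mul_const _)
  have hint1 : Integrable (fun ω => Real.exp (t * X ω)) μ := by
    refine Integrable.mono' (integrable_const (Real.exp |t|)) ?_ (ae_of_all _ fun ω => ?_)
    · exact ((hX.const_mul t).exp).aestronglyMeasurable
    · rw [Real.norm_eq_abs, abs_of_pos (Real.exp_pos _)]
      refine Real.exp_le_exp.mpr ?_
      calc t * X ω ≤ |t * X ω| := le_abs_self _
        _ = |t| * |X ω| := abs_mul _ _
        _ ≤ |t| * 1 := by gcongr; exact hb ω
        _ = |t| := mul_one _
  calc mgf X μ t = ∫ ω, Real.exp (t * X ω) ∂μ := rfl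
    _ ≤ ∫ ω, (Real.cosh t + X ω * ((Real.exp t - Real.exp (-t)) / 2)) ∂μ :=
        integral_mono hint1 hint2 key
    _ = Real.cosh t := by
        rw [integral_add (integrable_const _) (hXint.mul_const _), integral_const,
          integral_mul_const, h0]
        simp
    _ ≤ Real.exp (t ^ 2 / 2) := Real.cosh_le_exp_half_sq t

lemma saa_int_exp {Ω : Type*} [MeasurableSpace Ω] (μ : Measure Ω) [IsProbabilityMeasure μ]
    {X : Ω → ℝ} (hX : Measurable X) (hb : ∀ ω, |X ω| ≤ 1) (t : ℝ) :
    Integrable (fun ω => Real.exp (t * X ω)) μ := by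
  refine Integrable.mono' (integrable_const (Real.exp |t|)) ?_ (ae_of_all _ fun ω => ?_)
  · exact ((hX.const_mul t).exp).aestronglyMeasurable
  · rw [Real.norm_eq_abs, abs_of_pos (Real.exp_pos _)]
    refine Real.exp_le_exp.mpr ?_
    calc t * X ω ≤ |t * X ω| := le_abs_self _
      _ = |t| * |X ω| := abs_mul _ _
      _ ≤ |t| * 1 := by gcongr; exact hb ω
      _ = |t| := mul_one _

lemma saa_tail {Ω : Type*} [MeasurableSpace Ω] (μ : Measure Ω) [IsProbabilityMeasure μ]
    {N : ℕ} {X : Fin N → Ω → ℝ}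
    (hind : iIndepFun X μ) (hm : ∀ n, Measurable (X n))
    (hb : ∀ n ω, |X n ω| ≤ 1) (h0 : ∀ n, ∫ ω, X n ω ∂μ = 0) {ε : ℝ} (hε : 0 ≤ ε) :
    (μ {ω | (N : ℝ) * ε ≤ ∑ n, X n ω}).toReal ≤ Real.exp (-((N : ℝ) * ε ^ 2 / 2)) := by
  have h_int : Integrable (fun ω => Real.exp (ε * (∑ n, X n) ω)) μ :=
    hind.integrable_exp_mul_sum hm (fun i _ => saa_int_exp μ (hm i) (hb i) ε)
  have hch := measure_ge_le_exp_mul_mgf (X := ∑ n, X n) (μ := μ) ((N : ℝ) * ε) hε h_int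
  have hset : {ω | (N : ℝ) * ε ≤ (∑ n, X n) ω} = {ω | (N : ℝ) * ε ≤ ∑ n, X n ω} := by
    ext ω; simp [Finset.sum_apply]
  rw [hset] at hch
  refine hch.trans ?_
  rw [hind.mgf_sum hm Finset.univ]
  have hprod : ∏ n : Fin N, mgf (X n) μ ε ≤ Real.exp (ε ^ 2 / 2) ^ (N : ℕ) := by
    have := Finset.prod_le_prod (s := Finset.univ) (f := fun n => mgf (X n) μ ε)
      (g := fun _ => Real.exp (ε ^ 2 / 2)) (fun n _ => mgf_nonneg)
      (fun n _ => saa_mgf_le μ (hm n) (hb n) (h0 n) ε)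
    simpa using this
  calc Real.exp (-ε * ((N : ℝ) * ε)) * ∏ n : Fin N, mgf (X n) μ ε
      ≤ Real.exp (-ε * ((N : ℝ) * ε)) * Real.exp (ε ^ 2 / 2) ^ (N : ℕ) := by
        exact mul_le_mul_of_nonneg_left hprod (Real.exp_pos _).le
    _ = Real.exp (-((N : ℝ) * ε ^ 2 / 2)) := by
        rw [← Real.exp_nat_mul, ← Real.exp_add]
        congr 1; ring

lemma saa_tail2 {Ω : Type*} [MeasurableSpace Ω] (μ : Measure Ω) [IsProbabilityMeasure μ]
    {N : ℕ} {X : Fin N → Ω → ℝ}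
    (hind : iIndepFun X μ) (hm : ∀ n, Measurable (X n))
    (hb : ∀ n ω, |X n ω| ≤ 1) (h0 : ∀ n, ∫ ω, X n ω ∂μ = 0) {ε : ℝ} (hε : 0 ≤ ε) :
    (μ {ω | (N : ℝ) * ε < |∑ n, X n ω|}).toReal ≤ 2 * Real.exp (-((N : ℝ) * ε ^ 2 / 2)) := by
  have hindneg : iIndepFun (fun n => -X n) μ := by
    have := hind.comp (fun _ => fun y : ℝ => -y) (fun _ => measurable_neg)
    exact this
  have h1 := saa_tail μ hind hm hb h0 hε
  have h2 := saa_tail μ hindneg (fun n => (hm n).neg)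
    (fun n ω => by simpa using hb n ω) (fun n => by simp only [Pi.neg_apply, integral_neg, h0 n, neg_zero]) hε
  have hsub : {ω | (N : ℝ) * ε < |∑ n, X n ω|} ⊆
      {ω | (N : ℝ) * ε ≤ ∑ n, X n ω} ∪ {ω | (N : ℝ) * ε ≤ ∑ n, (-X n) ω} := by
    intro ω hω
    simp only [Set.mem_setOf_eq] at hω
    simp only [Set.mem_union, Set.mem_setOf_eq, Pi.neg_apply, ← Finset.sum_neg_distrib]
    rcases abs_cases (∑ n, X n ω) with ⟨he, _⟩ | ⟨he, _⟩
    · exact Or.inl (he ▸ hω).le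
    · exact Or.inr (by rw [Finset.sum_neg_distrib]; linarith [he ▸ hω])
  calc (μ {ω | (N : ℝ) * ε < |∑ n, X n ω|}).toReal
      ≤ (μ {ω | (N : ℝ) * ε ≤ ∑ n, X n ω} + μ {ω | (N : ℝ) * ε ≤ ∑ n, (-X n) ω}).toReal := by
        refine ENNReal.toReal_mono (by finiteness) ?_
        exact (measure_mono hsub).trans (measure_union_le _ _)
    _ = (μ {ω | (N : ℝ) * ε ≤ ∑ n, X n ω}).toReal +
        (μ {ω | (N : ℝ) * ε ≤ ∑ n, (-X n) ω}).toReal :=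
        ENNReal.toReal_add (measure_ne_top _ _) (measure_ne_top _ _)
    _ ≤ 2 * Real.exp (-((N : ℝ) * ε ^ 2 / 2)) := by
        have h2' : (μ {ω | (N : ℝ) * ε ≤ ∑ n, (-X n) ω}).toReal ≤
            Real.exp (-((N : ℝ) * ε ^ 2 / 2)) := h2
        linarith

lemma saa_arith (K N : ℕ) (ε δ : ℝ) (hε : 0 < ε) (hδ0 : 0 < δ) (hδ1 : δ < 1)
    (hNbig : (2 * Real.exp 1 ^ 2 * (K + 2) * Real.log 2 / ε ^ 2) * Real.log (2 / δ) ≤ N) :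
    (2 : ℝ) ^ K * (2 * Real.exp (-((N : ℝ) * ε ^ 2 / 2))) ≤ δ := by
  set A := Real.log (2 / δ) with hA
  have hlog2 : (0.6931471803 : ℝ) < Real.log 2 := Real.log_two_gt_d9
  have hAge : Real.log 2 ≤ A := by
    rw [hA]
    apply Real.log_le_log (by norm_num)
    rw [le_div_iff₀ hδ0]; nlinarith
  have hA0 : 0 < A := lt_of_lt_of_le (by linarith) hAge
  have he : (2.7182818283 : ℝ) < Real.exp 1 := Real.exp_one_gt_d9
  have hE : (5 : ℝ) ≤ Real.exp 1 ^ 2 * Real.log 2 := by nlinarith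
  have hK : (0 : ℝ) ≤ K := Nat.cast_nonneg K
  have hNe : 2 * Real.exp 1 ^ 2 * ((K : ℝ) + 2) * Real.log 2 * A ≤ (N : ℝ) * ε ^ 2 := by
    rw [div_mul_eq_mul_div, div_le_iff₀ (by positivity)] at hNbig
    linarith
  have hs : (K : ℝ) * Real.log 2 + A ≤ (N : ℝ) * ε ^ 2 / 2 := by
    have h1 : (5 : ℝ) * (((K : ℝ) + 2) * A) ≤
        (Real.exp 1 ^ 2 * Real.log 2) * (((K : ℝ) + 2) * A) := by
      apply mul_le_mul_of_nonneg_right hE; positivity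
    have h2 : (K : ℝ) * Real.log 2 ≤ (K : ℝ) * A := mul_le_mul_of_nonneg_left hAge hK
    nlinarith
  have hexp : Real.exp (-((N : ℝ) * ε ^ 2 / 2)) ≤ δ / 2 ^ (K + 1) := by
    have hpos : (0 : ℝ) < δ / 2 ^ (K + 1) := by positivity
    rw [← Real.exp_log hpos]
    apply Real.exp_le_exp.mpr
    rw [Real.log_div hδ0.ne' (by positivity), Real.log_pow]
    have hAd : A = Real.log 2 - Real.log δ := by
      rw [hA, Real.log_div (by norm_num) hδ0.ne']
    push_cast
    nlinarith
  calc (2 : ℝ) ^ K * (2 * Real.exp (-((N : ℝ) * ε ^ 2 / 2)))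
      ≤ (2 : ℝ) ^ K * (2 * (δ / 2 ^ (K + 1))) := by
        apply mul_le_mul_of_nonneg_left _ (by positivity)
        linarith
    _ = δ := by rw [pow_succ]; field_simp

end SAAHelpers

theorem saa_optimality_gap (L K N : ℕ) (hN : 0 < N)
    {Ω : Type*} [MeasurableSpace Ω] (μ : Measure Ω) [IsProbabilityMeasure μ]
    (utld : Ω → Fin L → ℝ) (hmeas0 : Measurable utld)
    (uh : Fin N → Ω → Fin L → ℝ) (hmeas : ∀ n, Measurable (uh n))
    (hind : iIndepFun uh μ)
    (hid : ∀ n, IdentDistrib (uh n) utld μ μ)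
    (𝒳 : Finset (Fin L → ℝ)) (hcard : 𝒳.card ≤ 2 ^ K)
    (xN : Ω → Fin L → ℝ)
    (hxN : ∀ ω, xN ω ∈ 𝒳 ∧ ∀ x ∈ 𝒳,
      (∑ n, if 0 ≤ ∑ l, uh n ω l * x l then (1 : ℝ) else 0) / N ≤
        (∑ n, if 0 ≤ ∑ l, uh n ω l * (xN ω) l then (1 : ℝ) else 0) / N)
    (xstar : Fin L → ℝ)
    (hxstar : xstar ∈ 𝒳 ∧ ∀ x ∈ 𝒳,
      (μ {ω' | 0 ≤ ∑ l, utld ω' l * x l}).toReal ≤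
        (μ {ω' | 0 ≤ ∑ l, utld ω' l * xstar l}).toReal)
    (ε δ : ℝ) (hε : 0 < ε) (hδ0 : 0 < δ) (hδ1 : δ < 1)
    (hNbig : (2 * Real.exp 1 ^ 2 * (K + 2) * Real.log 2 / ε ^ 2) * Real.log (2 / δ) ≤ N) :
    1 - δ ≤ (μ {ω |
      (μ {ω' | 0 ≤ ∑ l, utld ω' l * xstar l}).toReal -
        (μ {ω' | 0 ≤ ∑ l, utld ω' l * (xN ω) l}).toReal ≤ 2 * ε}).toReal := by
  classical
  have hNpos : (0 : ℝ) < N := Nat.cast_pos.mpr hN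
  -- basic measurability on the codomain space
  have hgSm : ∀ x : Fin L → ℝ, Measurable (fun v : Fin L → ℝ => ∑ l, v l * x l) := fun x =>
    Finset.measurable_sum _ (fun l _ => (measurable_pi_apply l).mul_const _)
  have hSm : ∀ x : Fin L → ℝ, MeasurableSet {v : Fin L → ℝ | 0 ≤ ∑ l, v l * x l} := fun x =>
    measurableSet_le measurable_const (hgSm x)
  -- true share
  set p : (Fin L → ℝ) → ℝ := fun x => (μ {ω' | 0 ≤ ∑ l, utld ω' l * x l}).toReal with hpdef
  have hp0 : ∀ x, 0 ≤ p x := fun x => ENNReal.toReal_nonneg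
  have hp1 : ∀ x, p x ≤ 1 := by
    intro x
    have h := prob_le_one (μ := μ) (s := {ω' | 0 ≤ ∑ l, utld ω' l * x l})
    have := ENNReal.toReal_mono (by simp) h
    simpa using this
  -- centered indicator variables
  set φ : (Fin L → ℝ) → (Fin L → ℝ) → ℝ :=
    fun x v => (if 0 ≤ ∑ l, v l * x l then (1 : ℝ) else 0) - p x with hφdef
  have hφm : ∀ x, Measurable (φ x) := fun x =>
    ((measurable_const.ite (hSm x) measurable_const).sub measurable_const)
  have hφb : ∀ x v, |φ x v| ≤ 1 := by
    intro x v
    rw [hφdef]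
    simp only
    split_ifs with h
    · rw [abs_le]; constructor <;> nlinarith [hp0 x, hp1 x]
    · rw [abs_le]; constructor <;> nlinarith [hp0 x, hp1 x]
  have hXind : ∀ x, iIndepFun (fun n => φ x ∘ uh n) μ := fun x =>
    hind.comp (fun _ => φ x) (fun _ => hφm x)
  have hXm : ∀ x n, Measurable (φ x ∘ uh n) := fun x n => (hφm x).comp (hmeas n)
  -- mean zero
  have hX0 : ∀ x n, ∫ ω, (φ x ∘ uh n) ω ∂μ = 0 := by
    intro x n
    have hpre : {ω | 0 ≤ ∑ l, uh n ω l * x l} =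
        uh n ⁻¹' {v : Fin L → ℝ | 0 ≤ ∑ l, v l * x l} := rfl
    have hmeq : μ {ω | 0 ≤ ∑ l, uh n ω l * x l} = μ {ω' | 0 ≤ ∑ l, utld ω' l * x l} := by
      rw [hpre]
      exact (hid n).measure_mem_eq (hSm x)
    have hindeq : (fun ω => (if 0 ≤ ∑ l, uh n ω l * x l then (1 : ℝ) else 0)) =
        Set.indicator {ω | 0 ≤ ∑ l, uh n ω l * x l} (fun _ => (1 : ℝ)) := by
      ext ω
      rw [Set.indicator_apply]
      simp [Set.mem_setOf_eq]
    have hms : MeasurableSet {ω | 0 ≤ ∑ l, uh n ω l * x l} := by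
      rw [hpre]; exact (hmeas n) (hSm x)
    have hint : Integrable (fun ω => (if 0 ≤ ∑ l, uh n ω l * x l then (1 : ℝ) else 0)) μ := by
      rw [hindeq]
      exact (integrable_const (1 : ℝ)).indicator hms
    have : ∫ ω, (φ x ∘ uh n) ω ∂μ =
        (∫ ω, (if 0 ≤ ∑ l, uh n ω l * x l then (1 : ℝ) else 0) ∂μ) - p x := by
      rw [show (fun ω => (φ x ∘ uh n) ω) =
        (fun ω => (if 0 ≤ ∑ l, uh n ω l * x l then (1 : ℝ) else 0) - p x) from rfl,
        integral_sub hint (integrable_const _), integral_const]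
      simp
    have h4 : (∫ ω, (if 0 ≤ ∑ l, uh n ω l * x l then (1 : ℝ) else 0) ∂μ) =
        (μ {ω | 0 ≤ ∑ l, uh n ω l * x l}).toReal := by
      rw [hindeq]
      exact integral_indicator_one hms
    rw [this, h4, hmeq, hpdef]
    simp
  -- empirical sums and bad sets
  set emp : (Fin L → ℝ) → Ω → ℝ :=
    fun x ω => ∑ n, (if 0 ≤ ∑ l, uh n ω l * x l then (1 : ℝ) else 0) with hempdef
  have hempm : ∀ x, Measurable (emp x) := by
    intro x
    apply Finset.measurable_sum
    intro n _
    have hms : MeasurableSet {ω | 0 ≤ ∑ l, uh n ω l * x l} := (hmeas n) (hSm x)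
    exact measurable_const.ite hms measurable_const
  set bad : (Fin L → ℝ) → Set Ω :=
    fun x => {ω | (N : ℝ) * ε < |emp x ω - (N : ℝ) * p x|} with hbaddef
  have hbadm : ∀ x, MeasurableSet (bad x) := fun x =>
    measurableSet_lt measurable_const (((hempm x).sub measurable_const).abs)
  have hsumeq : ∀ x ω, (∑ n, (φ x ∘ uh n) ω) = emp x ω - (N : ℝ) * p x := by
    intro x ω
    rw [hempdef]
    simp only [Function.comp_apply, hφdef, Finset.sum_sub_distrib, Finset.sum_const,
      Finset.card_univ, Fintype.card_fin, nsmul_eq_mul]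
  have hbadbound : ∀ x, (μ (bad x)).toReal ≤ 2 * Real.exp (-((N : ℝ) * ε ^ 2 / 2)) := by
    intro x
    have hset : bad x = {ω | (N : ℝ) * ε < |∑ n, (φ x ∘ uh n) ω|} := by
      ext ω; rw [hbaddef]; simp only [Set.mem_setOf_eq, hsumeq x ω]
    rw [hset]
    exact saa_tail2 μ (hXind x) (hXm x) (fun n ω => hφb x (uh n ω)) (hX0 x) hε.le
  set U : Set Ω := ⋃ x ∈ 𝒳, bad x with hUdef
  have hUm : MeasurableSet U := MeasurableSet.biUnion 𝒳.countable_toSet (fun x _ => hbadm x)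
  have hUle : (μ U).toReal ≤ δ := by
    calc (μ U).toReal ≤ (∑ x ∈ 𝒳, μ (bad x)).toReal := by
          refine ENNReal.toReal_mono ?_ (measure_biUnion_finset_le _ _)
          exact (ENNReal.sum_lt_top.mpr (fun _ _ => measure_lt_top _ _)).ne
      _ = ∑ x ∈ 𝒳, (μ (bad x)).toReal := ENNReal.toReal_sum (fun _ _ => measure_ne_top _ _)
      _ ≤ ∑ _x ∈ 𝒳, 2 * Real.exp (-((N : ℝ) * ε ^ 2 / 2)) :=
          Finset.sum_le_sum (fun x _ => hbadbound x)
      _ = (𝒳.card : ℝ) * (2 * Real.exp (-((N : ℝ) * ε ^ 2 / 2))) := by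
          rw [Finset.sum_const, nsmul_eq_mul]
      _ ≤ (2 : ℝ) ^ K * (2 * Real.exp (-((N : ℝ) * ε ^ 2 / 2))) := by
          apply mul_le_mul_of_nonneg_right _ (by positivity)
          calc (𝒳.card : ℝ) ≤ ((2 ^ K : ℕ) : ℝ) := Nat.cast_le.mpr hcard
            _ = (2 : ℝ) ^ K := by push_cast; ring
      _ ≤ δ := saa_arith K N ε δ hε hδ0 hδ1 hNbig
  -- good event implies small gap
  have hUT : Uᶜ ⊆ {ω | p xstar - p (xN ω) ≤ 2 * ε} := by
    intro ω hω
    simp only [hUdef, Set.compl_iUnion, Set.mem_iInter, Set.mem_compl_iff] at hω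
    have hbound : ∀ x ∈ 𝒳, |emp x ω - (N : ℝ) * p x| ≤ (N : ℝ) * ε := by
      intro x hx
      have := hω x hx
      rw [hbaddef] at this
      simpa [Set.mem_setOf_eq, not_lt] using this
    have h1 := abs_le.mp (hbound xstar hxstar.1)
    have h2 := abs_le.mp (hbound (xN ω) (hxN ω).1)
    have h3 : emp xstar ω ≤ emp (xN ω) ω := by
      have hh := (hxN ω).2 xstar hxstar.1
      rw [hempdef]
      rw [div_le_div_iff₀ hNpos hNpos] at hh
      exact le_of_mul_le_mul_right (by linarith) hNpos
    simp only [Set.mem_setOf_eq]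
    have hmul : (N : ℝ) * (p xstar - p (xN ω)) ≤ (N : ℝ) * (2 * ε) := by nlinarith
    exact le_of_mul_le_mul_left hmul hNpos
  have hcompl : (μ Uᶜ).toReal = 1 - (μ U).toReal := by
    rw [measure_compl hUm (measure_ne_top _ _), measure_univ,
      ENNReal.toReal_sub_of_le prob_le_one (by simp), ENNReal.toReal_one]
  calc 1 - δ ≤ 1 - (μ U).toReal := by linarith
    _ = (μ Uᶜ).toReal := hcompl.symm
    _ ≤ (μ {ω | p xstar - p (xN ω) ≤ 2 * ε}).toReal :=
        ENNReal.toReal_mono (measure_ne_top _ _) (measure_mono hUT)
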